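/- arXiv:1910.05512 — 2 statements merged into one kernel-verified Lean document; each statement's English description precedes it below -/
import Mathlib

section
/- Let S₁, A₁, S₂, A₂, S₂' be finite sets. Suppose p : S₁ × S₂ × A₁ × A₂ × S₂' → ℝ≥0 is a joint probability mass function, and define the conditional q(s₂'|s₂,a₂) = p(s₂,a₂,s₂')/p(s₂,a₂) whenever the marginal p(s₂,a₂) > 0. Suppose the marginal over (s₁,a₁) given (s₂,a₂) depends on a differentiable parameter θ only through a factor π_θ(a₁|s₁) with ∑_{a₁} π_θ(a₁|s₁) = 1 for all θ and s₁, and the transition kernel p(s₂'|s₁,s₂,a₁,a₂) and the distribution p(s₁|s₂,a₂) are independent of θ. Then ∑_{s₁,s₂,a₁,a₂,s₂'} p_θ(s₁,s₂,a₁,a₂,s₂') · d/dθ [−log q_θ(s₂'|s₂,a₂)] = 0. -/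
/-- Second term of the EITI mutual-information policy gradient vanishes.
Setting: joint pmf `p_θ(s₁,s₂,a₁,a₂,s₂') = m(s₂,a₂) · d(s₁|s₂,a₂) · π_θ(a₁|s₁) · k(s₂'|s₁,s₂,a₁,a₂)`
and conditional `q_θ(s₂'|s₂,a₂) = ∑_{s₁*,a₁*} k(s₂'|s₁*,s₂,a₁*,a₂) d(s₁*|s₂,a₂) π_θ(a₁*|s₁*)`. -/
theorem eiti_second_term_zero
    {S₁ A₁ S₂ A₂ S₂' : Type*} [Fintype S₁] [Fintype A₁] [Fintype S₂] [Fintype A₂] [Fintype S₂']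
    (m : S₂ → A₂ → ℝ) (d : S₂ → A₂ → S₁ → ℝ)
    (k : S₁ → S₂ → A₁ → A₂ → S₂' → ℝ)
    (π : ℝ → S₁ → A₁ → ℝ)
    (hm : ∀ s₂ a₂, 0 ≤ m s₂ a₂)
    (hd : ∀ s₂ a₂ s₁, 0 ≤ d s₂ a₂ s₁)
    (hdsum : ∀ s₂ a₂, ∑ s₁ : S₁, d s₂ a₂ s₁ = 1)
    (hk : ∀ s₁ s₂ a₁ a₂ s₂', 0 ≤ k s₁ s₂ a₁ a₂ s₂')
    (hksum : ∀ s₁ s₂ a₁ a₂, ∑ s₂' : S₂', k s₁ s₂ a₁ a₂ s₂' = 1)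
    (hπpos : ∀ θ s₁ a₁, 0 < π θ s₁ a₁)
    (hπsum : ∀ θ s₁, ∑ a₁ : A₁, π θ s₁ a₁ = 1)
    (hπdiff : ∀ s₁ a₁, Differentiable ℝ (fun θ => π θ s₁ a₁))
    (q : ℝ → S₂ → A₂ → S₂' → ℝ)
    (hq : ∀ θ s₂ a₂ s₂', q θ s₂ a₂ s₂' =
      ∑ s₁ : S₁, ∑ a₁ : A₁, k s₁ s₂ a₁ a₂ s₂' * d s₂ a₂ s₁ * π θ s₁ a₁)
    (hqpos : ∀ θ s₂ a₂ s₂', 0 < q θ s₂ a₂ s₂')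
    (θ : ℝ) :
    ∑ s₁ : S₁, ∑ s₂ : S₂, ∑ a₁ : A₁, ∑ a₂ : A₂, ∑ s₂' : S₂',
      (m s₂ a₂ * d s₂ a₂ s₁ * π θ s₁ a₁ * k s₁ s₂ a₁ a₂ s₂') *
        deriv (fun θ' => - Real.log (q θ' s₂ a₂ s₂')) θ = 0 := by
  -- differentiability of q in θ
  have hqdiff : ∀ s₂ a₂ s₂', Differentiable ℝ (fun θ' => q θ' s₂ a₂ s₂') := by
    intro s₂ a₂ s₂'
    have : (fun θ' => q θ' s₂ a₂ s₂') =
        fun θ' => ∑ s₁ : S₁, ∑ a₁ : A₁, k s₁ s₂ a₁ a₂ s₂' * d s₂ a₂ s₁ * π θ' s₁ a₁ :=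
      funext fun θ' => hq θ' s₂ a₂ s₂'
    rw [this]
    exact Differentiable.fun_sum fun s₁ _ => Differentiable.fun_sum fun a₁ _ =>
      (hπdiff s₁ a₁).const_mul _
  -- derivative of -log q
  have hderiv : ∀ s₂ a₂ s₂',
      deriv (fun θ' => - Real.log (q θ' s₂ a₂ s₂')) θ =
        -(deriv (fun θ' => q θ' s₂ a₂ s₂') θ) / q θ s₂ a₂ s₂' := by
    intro s₂ a₂ s₂'
    have h1 : HasDerivAt (fun θ' => q θ' s₂ a₂ s₂')
        (deriv (fun θ' => q θ' s₂ a₂ s₂') θ) θ :=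
      ((hqdiff s₂ a₂ s₂') θ).hasDerivAt
    have h2 := (h1.log (hqpos θ s₂ a₂ s₂').ne').fun_neg
    rw [h2.deriv, neg_div]
  -- sum over s₂' of q is 1
  have hqsum : ∀ θ' s₂ a₂, ∑ s₂' : S₂', q θ' s₂ a₂ s₂' = 1 := by
    intro θ' s₂ a₂
    simp only [hq]
    rw [Finset.sum_comm]
    have : ∀ s₁ : S₁, ∑ s₂' : S₂', ∑ a₁ : A₁,
        k s₁ s₂ a₁ a₂ s₂' * d s₂ a₂ s₁ * π θ' s₁ a₁ = d s₂ a₂ s₁ := by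
      intro s₁
      rw [Finset.sum_comm]
      have : ∀ a₁ : A₁, ∑ s₂' : S₂', k s₁ s₂ a₁ a₂ s₂' * d s₂ a₂ s₁ * π θ' s₁ a₁
          = d s₂ a₂ s₁ * π θ' s₁ a₁ := by
        intro a₁
        rw [← Finset.sum_mul, ← Finset.sum_mul, hksum, one_mul]
      rw [Finset.sum_congr rfl fun a₁ _ => this a₁, ← Finset.mul_sum, hπsum, mul_one]
    rw [Finset.sum_congr rfl fun s₁ _ => this s₁, hdsum]
  -- sum over s₂' of deriv q is 0
  have hdsum0 : ∀ s₂ a₂, ∑ s₂' : S₂', deriv (fun θ' => q θ' s₂ a₂ s₂') θ = 0 := by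
    intro s₂ a₂
    have := deriv_fun_sum (u := Finset.univ) (A := fun (s₂' : S₂') (θ' : ℝ) => q θ' s₂ a₂ s₂')
      (x := θ) (fun s₂' _ => ((hqdiff s₂ a₂ s₂') θ))
    rw [← this]
    have h1 : (fun θ' => ∑ s₂' : S₂', q θ' s₂ a₂ s₂') = fun _ => (1 : ℝ) :=
      funext fun θ' => hqsum θ' s₂ a₂
    rw [h1, deriv_const]
  -- reorder sums
  have reorder : ∀ (f : S₁ → S₂ → A₁ → A₂ → S₂' → ℝ),
      (∑ s₁ : S₁, ∑ s₂ : S₂, ∑ a₁ : A₁, ∑ a₂ : A₂, ∑ s₂' : S₂', f s₁ s₂ a₁ a₂ s₂') =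
      ∑ s₂ : S₂, ∑ a₂ : A₂, ∑ s₂' : S₂', ∑ s₁ : S₁, ∑ a₁ : A₁, f s₁ s₂ a₁ a₂ s₂' := by
    intro f
    rw [Finset.sum_comm]
    refine Finset.sum_congr rfl fun s₂ _ => ?_
    calc (∑ s₁ : S₁, ∑ a₁ : A₁, ∑ a₂ : A₂, ∑ s₂' : S₂', f s₁ s₂ a₁ a₂ s₂')
        = ∑ s₁ : S₁, ∑ a₂ : A₂, ∑ a₁ : A₁, ∑ s₂' : S₂', f s₁ s₂ a₁ a₂ s₂' :=
          Finset.sum_congr rfl fun s₁ _ => Finset.sum_comm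
      _ = ∑ a₂ : A₂, ∑ s₁ : S₁, ∑ a₁ : A₁, ∑ s₂' : S₂', f s₁ s₂ a₁ a₂ s₂' :=
          Finset.sum_comm
      _ = ∑ a₂ : A₂, ∑ s₁ : S₁, ∑ s₂' : S₂', ∑ a₁ : A₁, f s₁ s₂ a₁ a₂ s₂' :=
          Finset.sum_congr rfl fun a₂ _ => Finset.sum_congr rfl fun s₁ _ =>
            Finset.sum_comm
      _ = ∑ a₂ : A₂, ∑ s₂' : S₂', ∑ s₁ : S₁, ∑ a₁ : A₁, f s₁ s₂ a₁ a₂ s₂' :=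
          Finset.sum_congr rfl fun a₂ _ => Finset.sum_comm
  rw [reorder]
  have inner : ∀ s₂ a₂ s₂',
      (∑ s₁ : S₁, ∑ a₁ : A₁,
        (m s₂ a₂ * d s₂ a₂ s₁ * π θ s₁ a₁ * k s₁ s₂ a₁ a₂ s₂') *
          deriv (fun θ' => - Real.log (q θ' s₂ a₂ s₂')) θ) =
      -(m s₂ a₂) * deriv (fun θ' => q θ' s₂ a₂ s₂') θ := by
    intro s₂ a₂ s₂'
    have hsum : (∑ s₁ : S₁, ∑ a₁ : A₁,
        (m s₂ a₂ * d s₂ a₂ s₁ * π θ s₁ a₁ * k s₁ s₂ a₁ a₂ s₂') *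
          deriv (fun θ' => - Real.log (q θ' s₂ a₂ s₂')) θ) =
        (m s₂ a₂ * deriv (fun θ' => - Real.log (q θ' s₂ a₂ s₂')) θ) *
          ∑ s₁ : S₁, ∑ a₁ : A₁, k s₁ s₂ a₁ a₂ s₂' * d s₂ a₂ s₁ * π θ s₁ a₁ := by
      rw [Finset.mul_sum]
      refine Finset.sum_congr rfl fun s₁ _ => ?_
      rw [Finset.mul_sum]
      exact Finset.sum_congr rfl fun a₁ _ => by ring
    rw [hsum, ← hq, hderiv]
    have hne := (hqpos θ s₂ a₂ s₂').ne'
    field_simp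
  rw [Finset.sum_congr rfl fun s₂ _ => Finset.sum_congr rfl fun a₂ _ =>
    Finset.sum_congr rfl fun s₂' _ => inner s₂ a₂ s₂']
  refine Finset.sum_eq_zero fun s₂ _ => Finset.sum_eq_zero fun a₂ _ => ?_
  rw [← Finset.mul_sum, hdsum0, mul_zero]
end

section
/- Let S₁, S₂, A₁, A₂ be finite sets, p a probability mass function on S₁ × S₂ × A₁ × A₂, and for each (s₂,a₂) with positive marginal let p⁻(s₁*,a₁*|s₂,a₂) be any conditional probability mass function on S₁ × A₁ (i.e., summing to 1). Let r̃₂ : S₁ × S₂ × A₁ × A₂ → ℝ and define the counterfactual reward r̃₂⁻(s₂,a₂) = ∑_{s₁*,a₁*} p⁻(s₁*,a₁*|s₂,a₂) r̃₂(s₁*,s₂,a₁*,a₂). Suppose p factors as p(s₁,s₂,a₁,a₂) = p(s₂,a₂) · p₁(s₁|s₂) · π_θ(a₁|s₁) where only π_θ depends on a differentiable parameter θ, with ∑_{a₁} π_θ(a₁|s₁) = 1 for all θ, s₁, and p⁻ is independent of θ. Then ∑_{s₁,s₂,a₁,a₂} (d/dθ p_θ(s₁,s₂,a₁,a₂)) ·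 r̃₂⁻(s₂,a₂) = 0. -/
/-- Lemma 2 of the paper: the policy gradient of the joint distribution weighted by a
counterfactual reward depending only on `(s₂, a₂)` sums to zero. -/
theorem grad_joint_counterfactual_reward_zero
    {S₁ S₂ A₁ A₂ : Type*} [Fintype S₁] [Fintype S₂] [Fintype A₁] [Fintype A₂]
    (m : S₂ → A₂ → ℝ) (p₁ : S₂ → S₁ → ℝ)
    (π : ℝ → S₁ → A₁ → ℝ)
    (pminus : S₂ → A₂ → S₁ → A₁ → ℝ)
    (r₂ : S₁ → S₂ → A₁ → A₂ → ℝ)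
    (hm : ∀ s₂ a₂, 0 ≤ m s₂ a₂)
    (hp₁ : ∀ s₂ s₁, 0 ≤ p₁ s₂ s₁)
    (hpminus_nonneg : ∀ s₂ a₂ s₁ a₁, 0 ≤ pminus s₂ a₂ s₁ a₁)
    (hpminus_sum : ∀ s₂ a₂, ∑ s₁ : S₁, ∑ a₁ : A₁, pminus s₂ a₂ s₁ a₁ = 1)
    (hπpos : ∀ θ s₁ a₁, 0 < π θ s₁ a₁)
    (hπsum : ∀ θ s₁, ∑ a₁ : A₁, π θ s₁ a₁ = 1)
    (hπdiff : ∀ s₁ a₁, Differentiable ℝ (fun θ => π θ s₁ a₁))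
    (θ : ℝ) :
    ∑ s₁ : S₁, ∑ s₂ : S₂, ∑ a₁ : A₁, ∑ a₂ : A₂,
      deriv (fun θ' => m s₂ a₂ * p₁ s₂ s₁ * π θ' s₁ a₁) θ *
        (∑ s₁' : S₁, ∑ a₁' : A₁, pminus s₂ a₂ s₁' a₁' * r₂ s₁' s₂ a₁' a₂) = 0 := by
  have hds : ∀ s₁, deriv (fun θ' => ∑ a₁ : A₁, π θ' s₁ a₁) θ = 0 := by
    intro s₁
    have : (fun θ' => ∑ a₁ : A₁, π θ' s₁ a₁) = fun _ => (1 : ℝ) := by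
      funext θ'; exact hπsum θ' s₁
    rw [this, deriv_const]
  have hsum : ∀ s₁, ∑ a₁ : A₁, deriv (fun θ' => π θ' s₁ a₁) θ = 0 := by
    intro s₁
    rw [← hds s₁]
    rw [deriv_fun_sum (fun a₁ _ => (hπdiff s₁ a₁).differentiableAt)]
  have key : ∀ s₂ a₂ s₁ a₁, deriv (fun θ' => m s₂ a₂ * p₁ s₂ s₁ * π θ' s₁ a₁) θ
      = m s₂ a₂ * p₁ s₂ s₁ * deriv (fun θ' => π θ' s₁ a₁) θ := by
    intro s₂ a₂ s₁ a₁
    exact deriv_const_mul _ (hπdiff s₁ a₁).differentiableAt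
  simp only [key]
  apply Finset.sum_eq_zero; intro s₁ _
  apply Finset.sum_eq_zero; intro s₂ _
  rw [Finset.sum_comm]
  apply Finset.sum_eq_zero; intro a₂ _
  calc ∑ a₁ : A₁, m s₂ a₂ * p₁ s₂ s₁ * deriv (fun θ' => π θ' s₁ a₁) θ *
        (∑ s₁' : S₁, ∑ a₁' : A₁, pminus s₂ a₂ s₁' a₁' * r₂ s₁' s₂ a₁' a₂)
      = (m s₂ a₂ * p₁ s₂ s₁ *
          (∑ s₁' : S₁, ∑ a₁' : A₁, pminus s₂ a₂ s₁' a₁' * r₂ s₁' s₂ a₁' a₂)) *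
          ∑ a₁ : A₁, deriv (fun θ' => π θ' s₁ a₁) θ := by
        rw [Finset.mul_sum]; exact Finset.sum_congr rfl (fun a₁ _ => by ring)
    _ = 0 := by rw [hsum s₁, mul_zero]
end
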